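/- Fix integers n ≥ 1, c ≥ 1 and m ∈ {0, …, c}. The bijection ζ_m : P^n(c)_m → T(c) × GL(c, ℂ), (A₁, A₂; C₁, …, C_n; e) ↦ ((B_m, E_m, e), A_{2m}), induces a bijection between the orbit set P^n(c)_m / (GL(c, ℂ) × GL(c, ℂ)) (for the action (φ₁, φ₂): A_i ↦ φ₂A_iφ₁^{-1}, C_j ↦ φ₁C_jφ₂^{-1}, e ↦ eφ₁^{-1}) and the orbit set T(c) / GL(c, ℂ) (for the action φ: b_i ↦ φb_iφ^{-1}, e ↦ eφ^{-1}). -/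

import Mathlib

open Matrix

abbrev Mat (c : ℕ) := Matrix (Fin c) (Fin c) ℂ

noncomputable def cS (c : ℕ) (m : ℤ) : ℂ :=
  ((Real.cos (Real.pi * (m : ℝ) / ((c : ℝ) + 1)) : ℝ) : ℂ)

noncomputable def sS (c : ℕ) (m : ℤ) : ℂ :=
  ((Real.sin (Real.pi * (m : ℝ) / ((c : ℝ) + 1)) : ℝ) : ℂ)

noncomputable def A1M (c : ℕ) (m : ℤ) (A1 A2 : Mat c) : Mat c :=
  cS c m • A1 - sS c m • A2

noncomputable def A2M (c : ℕ) (m : ℤ) (A1 A2 : Mat c) : Mat c :=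
  sS c m • A1 + cS c m • A2

noncomputable def BM (c : ℕ) (m : ℤ) (A1 A2 : Mat c) : Mat c :=
  (A2M c m A1 A2)⁻¹ * A1M c m A1 A2

noncomputable def DM (n c : ℕ) (m : ℤ) (C : Fin n → Mat c) : Mat c :=
  ∑ q : Fin n, (((n - 1).choose q.val : ℂ) * cS c m ^ (n - 1 - q.val) * sS c m ^ q.val) • C q

noncomputable def EM (n c : ℕ) (m : ℤ) (A1 A2 : Mat c) (C : Fin n → Mat c) : Mat c :=
  DM n c m C * A2M c m A1 A2

/-- Condition (P1). -/
def CondP1 (n c : ℕ) (A1 A2 : Mat c) (C : Fin n → Mat c) : Prop :=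
  (∀ h : n = 1, A1 * C ⟨0, by omega⟩ * A2 = A2 * C ⟨0, by omega⟩ * A1) ∧
  ∀ q : ℕ, ∀ hq : q + 1 < n,
    A1 * C ⟨q, by omega⟩ = A2 * C ⟨q + 1, hq⟩ ∧
    C ⟨q, by omega⟩ * A1 = C ⟨q + 1, hq⟩ * A2

/-- Condition (P2). -/
def CondP2 (c : ℕ) (A1 A2 : Mat c) : Prop :=
  ∃ ν : ℂ × ℂ, ν ≠ 0 ∧ (ν.1 • A1 + ν.2 • A2).det ≠ 0

/-- Condition (P3), with `C1`, `Cn` the first and last of the `C` matrices. -/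
def CondP3 (n c : ℕ) (A1 A2 C1 Cn : Mat c) (e : Fin c → ℂ) : Prop :=
  ∀ l1 l2 m1 m2 : ℂ, (l1, l2) ≠ 0 → l1 ^ n * m1 + l2 ^ n * m2 = 0 →
    ∀ v : Fin c → ℂ,
      (l2 • A1 + l1 • A2).mulVec v = 0 →
      (C1 * A2 + m1 • 1).mulVec v = 0 →
      (Cn * A1 + ((-1 : ℂ) ^ (n - 1) * m2) • 1).mulVec v = 0 →
      e ⬝ᵥ v = 0 → v = 0

/-- Membership in `P^n(c)`: conditions (P1), (P2), (P3). -/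
def CondP (n c : ℕ) (hn : 0 < n) (A1 A2 : Mat c) (C : Fin n → Mat c) (e : Fin c → ℂ) : Prop :=
  CondP1 n c A1 A2 C ∧ CondP2 c A1 A2 ∧
    CondP3 n c A1 A2 (C ⟨0, hn⟩) (C ⟨n - 1, by omega⟩) e

/-- Condition (T2). -/
def CondT2 (c : ℕ) (b1 b2 : Mat c) (e : Fin c → ℂ) : Prop :=
  ∀ z w : ℂ, ∀ v : Fin c → ℂ,
    (b1 + z • 1).mulVec v = 0 → (b2 + w • 1).mulVec v = 0 → e ⬝ᵥ v = 0 → v = 0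

/-- ADHM data: conditions (T1) and (T2). -/
def ADHM (c : ℕ) (b1 b2 : Mat c) (e : Fin c → ℂ) : Prop :=
  b1 * b2 = b2 * b1 ∧ CondT2 c b1 b2 e

/-- Points of the subset `P^n(c)_m ⊂ P^n(c)` (where `A_{2m}` is invertible). -/
def PSubM (n c : ℕ) (hn : 0 < n) (m : ℕ) :=
  {t : Mat c × Mat c × (Fin n → Mat c) × (Fin c → ℂ) //
    CondP n c hn t.1 t.2.1 t.2.2.1 t.2.2.2 ∧ IsUnit (A2M c m t.1 t.2.1)}

/-- Points of `T(c)`. -/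
def TSubADHM (c : ℕ) := {b : Mat c × Mat c × (Fin c → ℂ) // ADHM c b.1 b.2.1 b.2.2}

/-- The orbit relation on `P^n(c)_m` for the GL(c,ℂ)×GL(c,ℂ) action. -/
def relP (n c : ℕ) (hn : 0 < n) (m : ℕ) : PSubM n c hn m → PSubM n c hn m → Prop :=
  fun t t' => ∃ φ1 φ2 : Mat c, IsUnit φ1 ∧ IsUnit φ2 ∧
    t'.1.1 = φ2 * t.1.1 * φ1⁻¹ ∧
    t'.1.2.1 = φ2 * t.1.2.1 * φ1⁻¹ ∧
    (∀ j, t'.1.2.2.1 j = φ1 * t.1.2.2.1 j * φ2⁻¹) ∧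
    t'.1.2.2.2 = Matrix.vecMul t.1.2.2.2 φ1⁻¹

/-- The orbit relation on `T(c)` for the GL(c,ℂ) action. -/
def relT (c : ℕ) : TSubADHM c → TSubADHM c → Prop :=
  fun b b' => ∃ φ : Mat c, IsUnit φ ∧
    b'.1.1 = φ * b.1.1 * φ⁻¹ ∧ b'.1.2.1 = φ * b.1.2.1 * φ⁻¹ ∧
    b'.1.2.2 = Matrix.vecMul b.1.2.2 φ⁻¹

/-! ### Auxiliary lemmas -/

section AuxBasic

lemma csq (c : ℕ) (m : ℤ) : cS c m ^ 2 + sS c m ^ 2 = 1 := by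
  rw [cS, sS, ← Complex.ofReal_pow, ← Complex.ofReal_pow, ← Complex.ofReal_add,
    ← Complex.ofReal_one]
  exact_mod_cast Real.cos_sq_add_sin_sq _

lemma sum_mulVec' {c : ℕ} {ι : Type*} (s : Finset ι) (f : ι → Mat c) (v : Fin c → ℂ) :
    (∑ i ∈ s, f i) *ᵥ v = ∑ i ∈ s, (f i) *ᵥ v := by
  induction s using Finset.cons_induction with
  | empty => simp [Matrix.zero_mulVec]
  | cons a s h ih => simp [Finset.sum_cons, Matrix.add_mulVec, ih]

lemma smul_one_mulVec {c : ℕ} (a : ℂ) (v : Fin c → ℂ) : (a • (1:Mat c)) *ᵥ v = a • v := by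
  rw [Matrix.smul_mulVec, Matrix.one_mulVec]

lemma mulVec_pow_eig {c : ℕ} (M : Mat c) (a : ℂ) (v : Fin c → ℂ) (h : M *ᵥ v = a • v) (k : ℕ) :
    (M ^ k) *ᵥ v = a ^ k • v := by
  induction k with
  | zero => simp
  | succ k ih =>
      rw [pow_succ, ← Matrix.mulVec_mulVec, h, Matrix.mulVec_smul, ih, smul_smul, pow_succ]
      rw [mul_comm]

lemma rot_conj {c : ℕ} (cc ss : ℂ) (A1 A2 C : Mat c) (h : A1*C*A2 = A2*C*A1) :
    (cc•A1 - ss•A2)*C*(ss•A1+cc•A2) = (ss•A1+cc•A2)*C*(cc•A1-ss•A2) := by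
  simp only [sub_mul, add_mul, mul_add, mul_sub, smul_mul_assoc, mul_smul_comm]
  rw [h]
  module

lemma conj_pow' {c : ℕ} (φ M : Mat c) (hd : IsUnit φ.det) (k : ℕ) :
    (φ * M * φ⁻¹)^k = φ * M^k * φ⁻¹ := by
  have h : φ⁻¹ * φ = 1 := Matrix.nonsing_inv_mul _ hd
  induction k with
  | zero => simp only [pow_zero, mul_one, Matrix.mul_nonsing_inv _ hd]
  | succ k ih =>
      have hcancel : ∀ X : Mat c, φ⁻¹ * (φ * X) = X := fun X => by
        rw [← Matrix.mul_assoc, h, Matrix.one_mul]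
      rw [pow_succ, pow_succ, ih]
      simp only [Matrix.mul_assoc, hcancel]

end AuxBasic
section Key
variable {c : ℕ}

/-- shift operator on sequences of matrices -/
def So (c : ℕ) : Module.End ℂ (ℕ → Mat c) where
  toFun f := fun j => f (j+1)
  map_add' _ _ := rfl
  map_smul' _ _ := rfl

noncomputable def To (cc ss : ℂ) (c : ℕ) : Module.End ℂ (ℕ → Mat c) :=
  cc • (1 : Module.End ℂ (ℕ → Mat c)) + ss • So c

lemma To_apply (cc ss : ℂ) (f : ℕ → Mat c) (j : ℕ) :
    (To cc ss c) f j = cc • f j + ss • f (j+1) := rfl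

lemma So_pow_apply (i : ℕ) (f : ℕ → Mat c) (j : ℕ) : ((So c)^i) f j = f (j+i) := by
  induction i generalizing j with
  | zero => simp
  | succ i ih =>
      rw [pow_succ', Module.End.mul_apply]
      show (((So c)^i) f) (j+1) = _
      rw [ih, show j + 1 + i = j + (i+1) by omega]

lemma To_pow_apply (cc ss : ℂ) (k : ℕ) (f : ℕ → Mat c) (j : ℕ) :
    ((To cc ss c)^k) f j
      = ∑ i ∈ Finset.range (k+1), ((k.choose i : ℂ) * cc^(k-i) * ss^i) • f (j+i) := by
  have hcomm : Commute (ss • So c) (cc • (1 : Module.End ℂ (ℕ → Mat c))) := by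
    unfold Commute SemiconjBy
    rw [smul_mul_smul_comm, smul_mul_smul_comm, mul_one, one_mul, mul_comm]
  have h1 : To cc ss c = ss • So c + cc • (1 : Module.End ℂ (ℕ → Mat c)) := by
    rw [To, add_comm]
  rw [h1, hcomm.add_pow]
  simp only [LinearMap.sum_apply, Finset.sum_apply]
  refine Finset.sum_congr rfl fun i hi => ?_
  rw [smul_pow, smul_pow, one_pow]
  simp only [Module.End.mul_apply, Module.End.natCast_apply, LinearMap.smul_apply,
    Module.End.one_apply, So_pow_apply, Pi.smul_apply]
  module


/-- `f` is a good sequence w.r.t. `X Y` up to bound `bnd`. -/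
def GoodSeq (X Y : Mat c) (f : ℕ → Mat c) (bnd : ℕ) : Prop :=
  ∀ j, j + 1 < bnd → X * f (j+1) = Y * f j

variable {X Y : Mat c} {cc ss : ℂ}

lemma factA (hone : cc • X + ss • Y = 1) {f : ℕ → Mat c} {bnd : ℕ}
    (hf : GoodSeq X Y f bnd) {j : ℕ} (hj : j + 1 < bnd) :
    X * ((To cc ss c) f j) = f j ∧ Y * ((To cc ss c) f j) = f (j+1) := by
  constructor
  · rw [To_apply, mul_add, mul_smul_comm, mul_smul_comm, hf j hj,
      ← smul_mul_assoc, ← smul_mul_assoc, ← add_mul, hone, one_mul]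
  · have hf' := hf j hj
    rw [To_apply, mul_add, mul_smul_comm, mul_smul_comm, ← hf' ,
      ← smul_mul_assoc, ← smul_mul_assoc, ← add_mul, hone, one_mul]

lemma factB (hone : cc • X + ss • Y = 1) {f : ℕ → Mat c} {bnd : ℕ}
    (hf : GoodSeq X Y f bnd) : GoodSeq X Y ((To cc ss c) f) (bnd - 1) := by
  intro j hj
  rw [(factA hone hf (j := j+1) (by omega)).1, (factA hone hf (j := j) (by omega)).2]

lemma goodPow (hone : cc • X + ss • Y = 1) {f : ℕ → Mat c} {bnd : ℕ}
    (hf : GoodSeq X Y f bnd) (k : ℕ) : GoodSeq X Y (((To cc ss c)^k) f) (bnd - k) := by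
  induction k with
  | zero => simpa using hf
  | succ k ih =>
      have : ((To cc ss c)^(k+1)) f = (To cc ss c) (((To cc ss c)^k) f) := by
        rw [pow_succ', Module.End.mul_apply]
      rw [this, show bnd - (k+1) = (bnd - k) - 1 by omega]
      exact factB hone ih

lemma stepL (hone : cc • X + ss • Y = 1) {f : ℕ → Mat c} {bnd : ℕ}
    (hf : GoodSeq X Y f bnd) {k j : ℕ} (hj : j + k + 1 < bnd) :
    X * (((To cc ss c)^(k+1)) f j) = ((To cc ss c)^k) f j ∧
    Y * (((To cc ss c)^(k+1)) f j) = ((To cc ss c)^k) f (j+1) := by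
  have h1 : ((To cc ss c)^(k+1)) f = (To cc ss c) (((To cc ss c)^k) f) := by
    rw [pow_succ', Module.End.mul_apply]
  rw [h1]
  exact factA hone (goodPow hone hf k) (by omega)

lemma collapseY (hone : cc • X + ss • Y = 1) {f : ℕ → Mat c} {bnd : ℕ}
    (hf : GoodSeq X Y f bnd) (b : ℕ) : ∀ q j, j + (q + b) < bnd →
    Y^b * (((To cc ss c)^(q+b)) f j) = ((To cc ss c)^q) f (j+b) := by
  induction b with
  | zero => intro q j h; simp
  | succ b ih =>
      intro q j h
      have hs := (stepL hone hf (k := q + b) (j := j) (by omega)).2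
      rw [pow_succ, mul_assoc, show q + (b+1) = (q + b) + 1 by omega, hs,
        ih q (j+1) (by omega), show j+1+b = j+(b+1) by omega]

lemma collapseX (hone : cc • X + ss • Y = 1) {f : ℕ → Mat c} {bnd : ℕ}
    (hf : GoodSeq X Y f bnd) (a : ℕ) : ∀ q j, j + (q + a) < bnd →
    X^a * (((To cc ss c)^(q+a)) f j) = ((To cc ss c)^q) f j := by
  induction a with
  | zero => intro q j h; simp
  | succ a ih =>
      intro q j h
      have hs := (stepL hone hf (k := q + a) (j := j) (by omega)).1
      rw [pow_succ, mul_assoc, show q + (a+1) = (q + a) + 1 by omega, hs,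
        ih q j (by omega)]

/-- The key recovery lemma: each `f j` is recovered from `(To^(n-1) f) 0`. -/
lemma key_recover (hone : cc • X + ss • Y = 1) {f : ℕ → Mat c} {n : ℕ} (hn : 0 < n)
    (hf : GoodSeq X Y f n) {j : ℕ} (hj : j < n) :
    X^(n-1-j) * (Y^j * (((To cc ss c)^(n-1)) f 0)) = f j := by
  have h1 : Y^j * (((To cc ss c)^(n-1)) f 0) = ((To cc ss c)^(n-1-j)) f j := by
    have := collapseY hone hf j (n-1-j) 0 (by omega)
    rw [show (n-1-j) + j = n-1 by omega] at this
    simpa using this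
  have h2 : X^(n-1-j) * (((To cc ss c)^(n-1-j)) f j) = ((To cc ss c)^0) f j := by
    have := collapseX hone hf (n-1-j) 0 j (by omega)
    simpa using this
  rw [h1, h2, pow_zero, Module.End.one_apply]

end Key

section Tuple
open Finset

/-- Extension of a `Fin n`-indexed family by junk. -/
def Cext {n c : ℕ} (C : Fin n → Mat c) : ℕ → Mat c :=
  fun j => if h : j < n then C ⟨j, h⟩ else 0

lemma A1_decomp {c : ℕ} (m : ℤ) (A1 A2 : Mat c) :
    cS c m • A1M c m A1 A2 + sS c m • A2M c m A1 A2 = A1 := by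
  rw [A1M, A2M]
  match_scalars <;> first | ring1 | linear_combination csq c m

lemma A2_decomp {c : ℕ} (m : ℤ) (A1 A2 : Mat c) :
    cS c m • A2M c m A1 A2 - sS c m • A1M c m A1 A2 = A2 := by
  rw [A1M, A2M]
  match_scalars <;> first | ring1 | linear_combination csq c m

lemma hY_lemma {c : ℕ} (m : ℤ) (A1 A2 : Mat c) (hd : IsUnit (A2M c m A1 A2).det) :
    (A2M c m A1 A2)⁻¹ * A1 = cS c m • BM c m A1 A2 + sS c m • 1 := by
  have h : cS c m • ((A2M c m A1 A2)⁻¹ * A1M c m A1 A2)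
      + sS c m • ((A2M c m A1 A2)⁻¹ * (A2M c m A1 A2)) = (A2M c m A1 A2)⁻¹ * A1 := by
    rw [← mul_smul_comm, ← mul_smul_comm, ← mul_add, A1_decomp]
  rw [← h, Matrix.nonsing_inv_mul _ hd, BM]

lemma hX_lemma {c : ℕ} (m : ℤ) (A1 A2 : Mat c) (hd : IsUnit (A2M c m A1 A2).det) :
    (A2M c m A1 A2)⁻¹ * A2 = cS c m • 1 - sS c m • BM c m A1 A2 := by
  have h : cS c m • ((A2M c m A1 A2)⁻¹ * (A2M c m A1 A2))
      - sS c m • ((A2M c m A1 A2)⁻¹ * A1M c m A1 A2) = (A2M c m A1 A2)⁻¹ * A2 := by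
    rw [← mul_smul_comm, ← mul_smul_comm, ← mul_sub, A2_decomp]
  rw [← h, Matrix.nonsing_inv_mul _ hd, BM]

lemma swapCq {n c : ℕ} (A1 A2 : Mat c) (C : Fin n → Mat c)
    (hP1 : CondP1 n c A1 A2 C) (q : Fin n) : A1 * C q * A2 = A2 * C q * A1 := by
  rcases q with ⟨qv, hq⟩
  rcases Nat.lt_or_ge (qv+1) n with hlt | hge
  · obtain ⟨h1, h2⟩ := hP1.2 qv hlt
    calc A1 * C ⟨qv, hq⟩ * A2 = A2 * C ⟨qv+1, hlt⟩ * A2 := by rw [h1]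
    _ = A2 * (C ⟨qv+1, hlt⟩ * A2) := by rw [Matrix.mul_assoc]
    _ = A2 * (C ⟨qv, hq⟩ * A1) := by rw [← h2]
    _ = A2 * C ⟨qv, hq⟩ * A1 := by rw [Matrix.mul_assoc]
  · by_cases hn1 : n = 1
    · subst hn1
      have h0 : (⟨qv, hq⟩ : Fin 1) = ⟨0, by omega⟩ := by
        apply Fin.ext; simp; omega
      rw [h0]; exact hP1.1 rfl
    · have hq2 : (n-2) + 1 < n := by omega
      obtain ⟨h1, h2⟩ := hP1.2 (n-2) hq2
      have hidx : (⟨n-2+1, hq2⟩ : Fin n) = ⟨qv, hq⟩ := by apply Fin.ext; simp; omega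
      rw [hidx] at h1 h2
      calc A1 * C ⟨qv, hq⟩ * A2 = A1 * (C ⟨qv, hq⟩ * A2) := by rw [Matrix.mul_assoc]
      _ = A1 * (C ⟨n-2, by omega⟩ * A1) := by rw [← h2]
      _ = A1 * C ⟨n-2, by omega⟩ * A1 := by rw [Matrix.mul_assoc]
      _ = A2 * C ⟨qv, hq⟩ * A1 := by rw [h1]

lemma T1_image {n c : ℕ} (m : ℤ) (A1 A2 : Mat c) (C : Fin n → Mat c)
    (hP1 : CondP1 n c A1 A2 C) (hU : IsUnit (A2M c m A1 A2)) :
    BM c m A1 A2 * EM n c m A1 A2 C = EM n c m A1 A2 C * BM c m A1 A2 := by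
  have hd : IsUnit (A2M c m A1 A2).det := (Matrix.isUnit_iff_isUnit_det _).1 hU
  have hcore : A1M c m A1 A2 * DM n c m C * A2M c m A1 A2
      = A2M c m A1 A2 * DM n c m C * A1M c m A1 A2 := by
    rw [DM]
    simp only [Finset.mul_sum, Finset.sum_mul, mul_smul_comm, smul_mul_assoc]
    refine Finset.sum_congr rfl fun q _ => ?_
    have := rot_conj (cS c m) (sS c m) A1 A2 (C q) (swapCq A1 A2 C hP1 q)
    rw [A1M, A2M, this]
  calc BM c m A1 A2 * EM n c m A1 A2 C
      = (A2M c m A1 A2)⁻¹ * (A1M c m A1 A2 * DM n c m C * A2M c m A1 A2) := by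
        rw [BM, EM]; simp only [Matrix.mul_assoc]
  _ = (A2M c m A1 A2)⁻¹ * (A2M c m A1 A2 * DM n c m C * A1M c m A1 A2) := by rw [hcore]
  _ = DM n c m C * A1M c m A1 A2 := by
        simp only [Matrix.mul_assoc, ← Matrix.mul_assoc ((A2M c m A1 A2)⁻¹),
          Matrix.nonsing_inv_mul _ hd, Matrix.one_mul]
  _ = EM n c m A1 A2 C * BM c m A1 A2 := by
        rw [EM, BM]
        simp only [Matrix.mul_assoc]
        rw [← Matrix.mul_assoc (A2M c m A1 A2), Matrix.mul_nonsing_inv _ hd, Matrix.one_mul]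

lemma hBz_lemma {c : ℕ} (m : ℤ) (A1 A2 : Mat c) (hd : IsUnit (A2M c m A1 A2).det) (z : ℂ) :
    A2M c m A1 A2 * (BM c m A1 A2 + z • 1)
      = (cS c m + z * sS c m) • A1 + (z * cS c m - sS c m) • A2 := by
  rw [mul_add, BM, ← Matrix.mul_assoc, Matrix.mul_nonsing_inv _ hd, Matrix.one_mul,
    mul_smul_comm, Matrix.mul_one, A1M, A2M]
  match_scalars <;> ring

lemma EMsum {n c : ℕ} (m : ℤ) (A1 A2 : Mat c) (C : Fin n → Mat c) :
    EM n c m A1 A2 C = ∑ q ∈ range n, (((n-1).choose q : ℂ) * cS c m ^(n-1-q) * sS c m ^ q) •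
      (sS c m • (Cext C q * A1) + cS c m • (Cext C q * A2)) := by
  rw [EM, DM, Finset.sum_mul]
  rw [← Fin.sum_univ_eq_sum_range (fun q => (((n-1).choose q : ℂ) * cS c m ^(n-1-q) * sS c m ^ q) •
      (sS c m • (Cext C q * A1) + cS c m • (Cext C q * A2))) n]
  refine Finset.sum_congr rfl fun q _ => ?_
  rw [smul_mul_assoc]
  congr 1
  have hC : Cext C q.val = C q := by rw [Cext, dif_pos q.isLt]
  rw [hC, A2M, mul_add, mul_smul_comm, mul_smul_comm]

lemma scalar_sum (n : ℕ) (hn : 0 < n) (cc ss r : ℂ) :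
    ∑ q ∈ range n, ((((n-1).choose q : ℂ)) * cc^(n-1-q) * ss^q) * (ss * r^(q+1) + cc * r^q)
      = (cc + ss*r)^n := by
  have h1 : (cc + ss*r)^n = (cc + ss*r) * (ss*r + cc)^(n-1) := by
    rw [add_comm (ss*r) cc, ← pow_succ', show n-1+1 = n by omega]
  rw [h1, add_pow, show n-1+1 = n by omega, Finset.mul_sum]
  refine Finset.sum_congr rfl fun q hq => ?_
  rw [mul_pow]
  ring

end Tuple
section T2
open Finset

lemma main_T2_core {n c : ℕ} (hn : 0 < n) (cc ss l1 l2 w : ℂ) (A1 A2 : Mat c)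
    (C' : ℕ → Mat c) (v : Fin c → ℂ)
    (hcl : cc * l2 - ss * l1 = 1)
    (hux : ∀ j, l2 • ((C' j * A1) *ᵥ v) + l1 • ((C' j * A2) *ᵥ v) = 0)
    (hshift : ∀ j, j+1 < n → C' j * A1 = C' (j+1) * A2)
    (hEv : (∑ q ∈ Finset.range n, ((((n-1).choose q : ℂ)) * cc^(n-1-q) * ss^q) •
        (ss • ((C' q * A1) *ᵥ v) + cc • ((C' q * A2) *ᵥ v))) + w • v = 0) :
    ∃ m1 m2 : ℂ, l1^n * m1 + l2^n * m2 = 0 ∧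
      (C' 0 * A2) *ᵥ v + m1 • v = 0 ∧
      (C' (n-1) * A1) *ᵥ v + ((-1:ℂ)^(n-1) * m2) • v = 0 := by
  have hn1 : n - 1 + 1 = n := by omega
  by_cases hl2 : l2 = 0
  · -- case l2 = 0
    have hss' : ss * l1 = -1 := by linear_combination (-1:ℂ) * hcl + cc * hl2
    have hne : ss * l1 ≠ 0 := by rw [hss']; exact neg_ne_zero.mpr one_ne_zero
    have hssne : ss ≠ 0 := left_ne_zero_of_mul hne
    have hl1ne : l1 ≠ 0 := right_ne_zero_of_mul hne
    have hu0 : ∀ j, (C' j * A2) *ᵥ v = 0 := by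
      intro j
      have h := hux j
      rw [hl2, zero_smul, zero_add] at h
      exact (smul_eq_zero.mp h).resolve_left hl1ne
    have hx0 : ∀ j, j+1 < n → (C' j * A1) *ᵥ v = 0 := fun j hj => by
      rw [hshift j hj]; exact hu0 _
    have hsum : (∑ q ∈ Finset.range n, ((((n-1).choose q : ℂ)) * cc^(n-1-q) * ss^q) •
        (ss • ((C' q * A1) *ᵥ v) + cc • ((C' q * A2) *ᵥ v)))
        = (ss^n) • ((C' (n-1) * A1) *ᵥ v) := by
      rw [Finset.sum_eq_single (n-1)]
      · rw [hu0 (n-1), Nat.choose_self, Nat.sub_self, pow_zero, smul_zero, add_zero,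
          smul_smul]
        congr 1
        rw [Nat.cast_one, one_mul, one_mul, ← pow_succ, hn1]
      · intro q hq hqne
        have hqn : q < n := mem_range.mp hq
        rw [hx0 q (by omega), hu0 q, smul_zero, smul_zero, add_zero, smul_zero]
      · intro h
        exact absurd (mem_range.mpr (by omega)) h
    rw [hsum] at hEv
    refine ⟨0, (-1:ℂ)^(n-1) * w * (ss^n)⁻¹, ?_, ?_, ?_⟩
    · rw [hl2, zero_pow (by omega : n ≠ 0)]; ring
    · rw [hu0 0, zero_smul, add_zero]
    · have hm : (-1:ℂ)^(n-1) * ((-1:ℂ)^(n-1) * w * (ss^n)⁻¹) = (ss^n)⁻¹ * w := by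
        rw [← mul_assoc, ← mul_assoc, ← pow_add, Even.neg_one_pow ⟨n-1, by ring⟩]
        ring
      rw [hm]
      have h2 := congrArg (fun u => (ss^n)⁻¹ • u) hEv
      simpa [smul_add, smul_smul, inv_mul_cancel₀ (pow_ne_zero n hssne)] using h2
  · -- case l2 ≠ 0
    have hxu : ∀ j, (C' j * A1) *ᵥ v = (-l1/l2) • ((C' j * A2) *ᵥ v) := by
      intro j
      have hc : l2 * (-l1/l2) = -l1 := by
        rw [← mul_div_assoc, mul_comm l2 (-l1), mul_div_assoc, div_self hl2, mul_one]
      apply smul_right_injective (Fin c → ℂ) hl2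
      show l2 • ((C' j * A1) *ᵥ v) = l2 • ((-l1/l2) • ((C' j * A2) *ᵥ v))
      rw [smul_smul, hc]
      rw [neg_smul]
      exact eq_neg_of_add_eq_zero_left (hux j)
    have huj : ∀ j, j < n → (C' j * A2) *ᵥ v = ((-l1/l2))^j • ((C' 0 * A2) *ᵥ v) := by
      intro j
      induction j with
      | zero => intro _; rw [pow_zero, one_smul]
      | succ j ih =>
          intro hj
          have h1 : (C' (j+1) * A2) *ᵥ v = (C' j * A1) *ᵥ v := by
            rw [hshift j hj]
          rw [h1, hxu j, ih (by omega), smul_smul, ← pow_succ']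
    have hxn : ∀ j, j < n → (C' j * A1) *ᵥ v = ((-l1/l2))^(j+1) • ((C' 0 * A2) *ᵥ v) := by
      intro j hj
      rw [hxu j, huj j hj, smul_smul, ← pow_succ']
    have hsum : (∑ q ∈ Finset.range n, ((((n-1).choose q : ℂ)) * cc^(n-1-q) * ss^q) •
        (ss • ((C' q * A1) *ᵥ v) + cc • ((C' q * A2) *ᵥ v)))
        = ((cc + ss * (-l1/l2))^n) • ((C' 0 * A2) *ᵥ v) := by
      have hterm : ∀ q ∈ Finset.range n,
          ((((n-1).choose q : ℂ)) * cc^(n-1-q) * ss^q) •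
            (ss • ((C' q * A1) *ᵥ v) + cc • ((C' q * A2) *ᵥ v))
          = (((((n-1).choose q : ℂ)) * cc^(n-1-q) * ss^q) *
              (ss * (-l1/l2)^(q+1) + cc * (-l1/l2)^q)) • ((C' 0 * A2) *ᵥ v) := by
        intro q hq
        rw [hxn q (mem_range.mp hq), huj q (mem_range.mp hq), smul_smul, smul_smul,
          ← add_smul, smul_smul]
      rw [Finset.sum_congr rfl hterm, ← Finset.sum_smul, scalar_sum n hn]
    rw [hsum] at hEv
    have hcr : (cc + ss * (-l1/l2))^n = (1/l2)^n := by
      congr 1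
      field_simp
      linear_combination hcl
    rw [hcr] at hEv
    have hu0 : (C' 0 * A2) *ᵥ v = -((l2^n * w) • v) := by
      have h2 := congrArg (fun u => (l2^n) • u) hEv
      have hcc : (l2:ℂ)^n * (1/l2)^n = 1 := by
        rw [← mul_pow]
        field_simp
        exact one_pow n
      simpa [smul_add, smul_smul, hcc, mul_inv_cancel₀ (pow_ne_zero n hl2),
        add_eq_zero_iff_eq_neg] using h2
    refine ⟨l2^n * w, -(l1^n * w), by ring, ?_, ?_⟩
    · rw [hu0, neg_add_cancel]
    · rw [hxn (n-1) (by omega), hn1, hu0]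
      have hc0 : ((-l1/l2))^n * (-(l2^n * w)) + (-1:ℂ)^(n-1) * (-(l1^n * w)) = 0 := by
        have f1 : ((-l1/l2))^n * l2^n = (-l1)^n := by
          rw [div_pow, div_mul_cancel₀]
          exact pow_ne_zero _ hl2
        have f2 : ((-1:ℂ))^(n-1) * (-1) = (-1:ℂ)^n := by rw [← pow_succ, hn1]
        have f3 : (-l1:ℂ)^n = (-1:ℂ)^n * l1^n := by rw [neg_pow]
        linear_combination (-w) * f1 + (-w) * f3 + (l1^n * w) * f2
      rw [smul_neg, smul_smul, ← neg_smul, ← add_smul]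
      convert zero_smul ℂ v using 2
      linear_combination hc0
end T2
section T2Image
open Finset

lemma T2_image {n c : ℕ} (m : ℤ) (hn : 0 < n) (A1 A2 : Mat c) (C : Fin n → Mat c)
    (e : Fin c → ℂ) (hP : CondP n c hn A1 A2 C e) (hU : IsUnit (A2M c m A1 A2)) :
    CondT2 c (BM c m A1 A2) (EM n c m A1 A2 C) e := by
  intro z w v hzv hwv hev
  obtain ⟨hP1, _, hP3⟩ := hP
  have hd : IsUnit (A2M c m A1 A2).det := (Matrix.isUnit_iff_isUnit_det _).1 hU
  have hcs := csq c m
  have hcl : cS c m * (cS c m + z * sS c m) - sS c m * (z * cS c m - sS c m) = 1 := by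
    linear_combination hcs
  have h1 : ((cS c m + z * sS c m) • A1 + (z * cS c m - sS c m) • A2) *ᵥ v = 0 := by
    rw [← hBz_lemma m A1 A2 hd z, ← Matrix.mulVec_mulVec, hzv, Matrix.mulVec_zero]
  have hux : ∀ j : ℕ, (cS c m + z * sS c m) • ((Cext C j * A1) *ᵥ v)
      + (z * cS c m - sS c m) • ((Cext C j * A2) *ᵥ v) = 0 := by
    intro j
    have h2 : (Cext C j * ((cS c m + z * sS c m) • A1 + (z * cS c m - sS c m) • A2)) *ᵥ v
        = 0 := by
      rw [← Matrix.mulVec_mulVec, h1, Matrix.mulVec_zero]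
    rwa [mul_add, mul_smul_comm, mul_smul_comm, Matrix.add_mulVec,
      Matrix.smul_mulVec, Matrix.smul_mulVec] at h2
  have hshift : ∀ j, j + 1 < n → Cext C j * A1 = Cext C (j+1) * A2 := by
    intro j hj
    have h3 := (hP1.2 j hj).2
    simp only [Cext]
    rw [dif_pos (show j < n by omega), dif_pos hj]
    exact h3
  have hEv : (∑ q ∈ Finset.range n, ((((n-1).choose q : ℂ)) * cS c m^(n-1-q) * sS c m^q) •
      (sS c m • ((Cext C q * A1) *ᵥ v) + cS c m • ((Cext C q * A2) *ᵥ v))) + w • v = 0 := by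
    have h4 : (EM n c m A1 A2 C) *ᵥ v + w • v = 0 := by
      rwa [Matrix.add_mulVec, smul_one_mulVec] at hwv
    rw [EMsum m A1 A2 C, sum_mulVec'] at h4
    simp only [Matrix.smul_mulVec, Matrix.add_mulVec] at h4
    exact h4
  obtain ⟨m1, m2, hconstr, hC0, hCn⟩ := main_T2_core hn (cS c m) (sS c m)
    (z * cS c m - sS c m) (cS c m + z * sS c m) w A1 A2 (Cext C) v hcl hux hshift hEv
  have hne : ((z * cS c m - sS c m), (cS c m + z * sS c m)) ≠ (0 : ℂ × ℂ) := by
    intro h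
    have ha : z * cS c m - sS c m = 0 := congrArg Prod.fst h
    have hb : cS c m + z * sS c m = 0 := congrArg Prod.snd h
    exact one_ne_zero (α := ℂ)
      (by linear_combination (-1:ℂ) * hcl + cS c m * hb - sS c m * ha)
  have hentry0 : Cext C 0 = C ⟨0, hn⟩ := by simp only [Cext]; rw [dif_pos hn]
  have hentryn : Cext C (n-1) = C ⟨n-1, by omega⟩ := by
    simp only [Cext]; rw [dif_pos (by omega : n - 1 < n)]
  refine hP3 (z * cS c m - sS c m) (cS c m + z * sS c m) m1 m2 hne hconstr v h1 ?_ ?_ hev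
  · rw [Matrix.add_mulVec, smul_one_mulVec, ← hentry0]; exact hC0
  · rw [Matrix.add_mulVec, smul_one_mulVec, ← hentryn]; exact hCn

lemma ADHM_image {n c : ℕ} (m : ℤ) (hn : 0 < n) (A1 A2 : Mat c) (C : Fin n → Mat c)
    (e : Fin c → ℂ) (hP : CondP n c hn A1 A2 C e) (hU : IsUnit (A2M c m A1 A2)) :
    ADHM c (BM c m A1 A2) (EM n c m A1 A2 C) e :=
  ⟨T1_image m A1 A2 C hP.1 hU, T2_image m hn A1 A2 C e hP hU⟩

end T2Image
section Sigma
open Finset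

variable {n c : ℕ}

noncomputable def sA1 (c : ℕ) (m : ℤ) (b1 : Mat c) : Mat c := cS c m • b1 + sS c m • 1
noncomputable def sA2 (c : ℕ) (m : ℤ) (b1 : Mat c) : Mat c := cS c m • 1 - sS c m • b1
noncomputable def sC (n c : ℕ) (m : ℤ) (b1 b2 : Mat c) : Fin n → Mat c :=
  fun j => (sA2 c m b1)^(n-1-j.val) * ((sA1 c m b1)^(j.val) * b2)

lemma sA2M (m : ℤ) (b1 : Mat c) : A2M c m (sA1 c m b1) (sA2 c m b1) = 1 := by
  rw [A2M, sA1, sA2]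
  match_scalars <;> first | ring1 | linear_combination csq c m

lemma sA1M (m : ℤ) (b1 : Mat c) : A1M c m (sA1 c m b1) (sA2 c m b1) = b1 := by
  rw [A1M, sA1, sA2]
  match_scalars <;> first | ring1 | linear_combination csq c m

lemma sBM (m : ℤ) (b1 : Mat c) : BM c m (sA1 c m b1) (sA2 c m b1) = b1 := by
  rw [BM, sA2M, sA1M, inv_one, Matrix.one_mul]

lemma sComm12 (m : ℤ) (b1 : Mat c) : Commute (sA1 c m b1) (sA2 c m b1) := by
  unfold Commute SemiconjBy sA1 sA2
  simp only [mul_sub, sub_mul, mul_add, add_mul, smul_mul_assoc, mul_smul_comm,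
    Matrix.mul_one, Matrix.one_mul]
  module

lemma sComm1b (m : ℤ) (b1 b2 : Mat c) (hb : b1 * b2 = b2 * b1) :
    Commute (sA1 c m b1) b2 := by
  unfold Commute SemiconjBy sA1
  simp only [add_mul, mul_add, smul_mul_assoc, mul_smul_comm, Matrix.mul_one, Matrix.one_mul]
  rw [hb]

lemma sComm2b (m : ℤ) (b1 b2 : Mat c) (hb : b1 * b2 = b2 * b1) :
    Commute (sA2 c m b1) b2 := by
  unfold Commute SemiconjBy sA2
  simp only [sub_mul, mul_sub, smul_mul_assoc, mul_smul_comm, Matrix.mul_one, Matrix.one_mul]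
  rw [hb]

lemma natCast_mat (c k : ℕ) : ((k : ℕ) : Mat c) = (k:ℂ) • (1 : Mat c) := by
  rw [Nat.cast_smul_eq_nsmul, nsmul_eq_mul, mul_one]

lemma sDM (m : ℤ) (hn : 0 < n) (b1 b2 : Mat c) (hb : b1 * b2 = b2 * b1) :
    DM n c m (sC n c m b1 b2) = b2 := by
  have hcomm : Commute (sS c m • sA1 c m b1) (cS c m • sA2 c m b1) :=
    ((sComm12 m b1).smul_left (sS c m)).smul_right (cS c m)
  have h2 : (sS c m • sA1 c m b1 + cS c m • sA2 c m b1) ^ (n-1) * b2 = b2 := by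
    rw [show sS c m • sA1 c m b1 + cS c m • sA2 c m b1
      = A2M c m (sA1 c m b1) (sA2 c m b1) from rfl, sA2M, one_pow, Matrix.one_mul]
  have h3 : DM n c m (sC n c m b1 b2)
      = ∑ i ∈ range n, ((((n-1).choose i : ℂ)) * cS c m ^(n-1-i) * sS c m ^ i) •
        ((sA2 c m b1)^(n-1-i) * ((sA1 c m b1)^i * b2)) := by
    rw [DM, ← Fin.sum_univ_eq_sum_range (fun i =>
      ((((n-1).choose i : ℂ)) * cS c m ^(n-1-i) * sS c m ^ i) •
        ((sA2 c m b1)^(n-1-i) * ((sA1 c m b1)^i * b2))) n]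
    rfl
  rw [h3]
  conv_rhs => rw [← h2, hcomm.add_pow, Finset.sum_mul]
  rw [show n - 1 + 1 = n by omega]
  refine Finset.sum_congr rfl fun i hi => ?_
  have hswap : (sA1 c m b1)^i * (sA2 c m b1)^(n-1-i) * b2
      = (sA2 c m b1)^(n-1-i) * ((sA1 c m b1)^i * b2) := by
    rw [((sComm12 m b1).pow_pow i (n-1-i)).eq, Matrix.mul_assoc]
  rw [natCast_mat, smul_pow, smul_pow]
  simp only [smul_mul_assoc, mul_smul_comm, smul_smul, Matrix.one_mul, Matrix.mul_one]
  rw [hswap]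
  congr 1
  ring

lemma sEM (m : ℤ) (hn : 0 < n) (b1 b2 : Mat c) (hb : b1 * b2 = b2 * b1) :
    EM n c m (sA1 c m b1) (sA2 c m b1) (sC n c m b1 b2) = b2 := by
  rw [EM, sA2M, Matrix.mul_one, sDM m hn b1 b2 hb]

lemma assoc_swap (a b z : Mat c) (h : a * b = b * a) : a * (b * z) = b * (a * z) := by
  rw [← Matrix.mul_assoc, h, Matrix.mul_assoc]

lemma sP1 (m : ℤ) (hn : 0 < n) (b1 b2 : Mat c) (hb : b1 * b2 = b2 * b1) :
    CondP1 n c (sA1 c m b1) (sA2 c m b1) (sC n c m b1 b2) := by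
  have c1C : ∀ j : Fin n, Commute (sA1 c m b1) (sC n c m b1 b2 j) := fun j =>
    ((sComm12 m b1).pow_right _).mul_right
      (((Commute.refl (sA1 c m b1)).pow_right _).mul_right (sComm1b m b1 b2 hb))
  have c2C : ∀ j : Fin n, Commute (sA2 c m b1) (sC n c m b1 b2 j) := fun j =>
    ((Commute.refl (sA2 c m b1)).pow_right _).mul_right
      (((sComm12 m b1).symm.pow_right _).mul_right (sComm2b m b1 b2 hb))
  have hrel : ∀ q : ℕ, ∀ hq : q + 1 < n,
      sA1 c m b1 * sC n c m b1 b2 ⟨q, by omega⟩ = sA2 c m b1 * sC n c m b1 b2 ⟨q+1, hq⟩ := by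
    intro q hq
    have e1 : n - 1 - q = (n - 1 - (q+1)) + 1 := by omega
    show sA1 c m b1 * ((sA2 c m b1)^(n-1-q) * ((sA1 c m b1)^q * b2))
      = sA2 c m b1 * ((sA2 c m b1)^(n-1-(q+1)) * ((sA1 c m b1)^(q+1) * b2))
    rw [assoc_swap _ _ _ ((sComm12 m b1).pow_right (n-1-q)).eq, e1, pow_succ',
      Matrix.mul_assoc]
    congr 2
    rw [← Matrix.mul_assoc, ← pow_succ']
  constructor
  · intro h1
    subst h1
    rw [Matrix.mul_assoc, ← (c2C ⟨0, by omega⟩).eq, ← Matrix.mul_assoc,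
      (sComm12 m b1).eq, Matrix.mul_assoc, (c1C ⟨0, by omega⟩).eq, ← Matrix.mul_assoc]
  · intro q hq
    refine ⟨hrel q hq, ?_⟩
    calc sC n c m b1 b2 ⟨q, by omega⟩ * sA1 c m b1
        = sA1 c m b1 * sC n c m b1 b2 ⟨q, by omega⟩ := ((c1C _).eq).symm
    _ = sA2 c m b1 * sC n c m b1 b2 ⟨q+1, hq⟩ := hrel q hq
    _ = sC n c m b1 b2 ⟨q+1, hq⟩ * sA2 c m b1 := (c2C _).eq

lemma sP2 (m : ℤ) (b1 : Mat c) : CondP2 c (sA1 c m b1) (sA2 c m b1) := by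
  refine ⟨(sS c m, cS c m), ?_, ?_⟩
  · intro h
    have h1 : sS c m = 0 := congrArg Prod.fst h
    have h2 : cS c m = 0 := congrArg Prod.snd h
    have h3 : (1:ℂ) = 0 := by rw [← csq c m, h1, h2]; ring
    exact one_ne_zero h3
  · have h4 : (sS c m, cS c m).1 • sA1 c m b1 + (sS c m, cS c m).2 • sA2 c m b1
        = (1 : Mat c) := sA2M m b1
    rw [h4, Matrix.det_one]
    exact one_ne_zero

lemma eigen_extract {c : ℕ} (M b2 : Mat c) (v : Fin c → ℂ) (α μ : ℂ) (hα : α ≠ 0)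
    (hMv : M *ᵥ v = α • v) (k : ℕ)
    (h : (b2 * M^k + μ • 1) *ᵥ v = 0) :
    (b2 + (μ / α^k) • 1) *ᵥ v = 0 := by
  rw [Matrix.add_mulVec, smul_one_mulVec] at h ⊢
  rw [← Matrix.mulVec_mulVec, mulVec_pow_eig M α v hMv k, Matrix.mulVec_smul] at h
  have h2 := congrArg (fun u => (α^k)⁻¹ • u) h
  simpa [smul_add, smul_smul, inv_mul_cancel₀ (pow_ne_zero k hα), div_eq_inv_mul] using h2

end Sigma
section SigmaP3
open Finset

variable {n c : ℕ}

lemma sP3 (m : ℤ) (hn : 0 < n) (b1 b2 : Mat c) (e : Fin c → ℂ) (hb : b1 * b2 = b2 * b1)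
    (hT2 : CondT2 c b1 b2 e) :
    CondP3 n c (sA1 c m b1) (sA2 c m b1) (sC n c m b1 b2 ⟨0, hn⟩)
      (sC n c m b1 b2 ⟨n-1, by omega⟩) e := by
  intro l1 l2 m1 m2 hne hconstr v hv1 hv2 hv3 hev
  have hcs := csq c m
  have hexp : l2 • sA1 c m b1 + l1 • sA2 c m b1
      = (l2 * cS c m - l1 * sS c m) • b1 + (l2 * sS c m + l1 * cS c m) • 1 := by
    rw [sA1, sA2]
    match_scalars <;> ring
  rw [hexp] at hv1
  by_cases hp : l2 * cS c m - l1 * sS c m = 0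
  · -- p = 0 : k ≠ 0 and conclude directly
    have hk : l2 * sS c m + l1 * cS c m ≠ 0 := by
      intro hk0
      have hl2 : l2 = 0 := by linear_combination cS c m * hp + sS c m * hk0 - l2 * hcs + l2 * hcs + (- l2) * hcs + l2 * hcs - l2*hcs + l2*hcs - l2*hcs
      have hl1 : l1 = 0 := by linear_combination cS c m * hk0 - sS c m * hp - l1 * hcs + l1*hcs - l1*hcs
      exact hne (by rw [hl1, hl2]; rfl)
    rw [hp, zero_smul, zero_add, smul_one_mulVec] at hv1
    exact (smul_eq_zero.mp hv1).resolve_left hk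
  · -- p ≠ 0
    have hv1' : (l2 * cS c m - l1 * sS c m) • (b1 *ᵥ v)
        + (l2 * sS c m + l1 * cS c m) • v = 0 := by
      rw [Matrix.add_mulVec, Matrix.smul_mulVec, smul_one_mulVec] at hv1
      exact hv1
    have hb1v : b1 *ᵥ v
        = (-((l2 * sS c m + l1 * cS c m) / (l2 * cS c m - l1 * sS c m))) • v := by
      apply smul_right_injective (Fin c → ℂ) hp
      show (l2 * cS c m - l1 * sS c m) • (b1 *ᵥ v) = (l2 * cS c m - l1 * sS c m) •
        ((-((l2 * sS c m + l1 * cS c m) / (l2 * cS c m - l1 * sS c m))) • v)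
      rw [smul_smul, show (l2 * cS c m - l1 * sS c m) *
        (-((l2 * sS c m + l1 * cS c m) / (l2 * cS c m - l1 * sS c m)))
        = -(l2 * sS c m + l1 * cS c m) from by field_simp, neg_smul]
      exact eq_neg_of_add_eq_zero_left hv1'
    have hz : (b1 + ((l2 * sS c m + l1 * cS c m) / (l2 * cS c m - l1 * sS c m)) • 1) *ᵥ v
        = 0 := by
      rw [Matrix.add_mulVec, smul_one_mulVec, hb1v, neg_smul, neg_add_cancel]
    have hA1v : sA1 c m b1 *ᵥ v = (-l1 / (l2 * cS c m - l1 * sS c m)) • v := by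
      rw [sA1, Matrix.add_mulVec, Matrix.smul_mulVec, Matrix.smul_mulVec,
        Matrix.one_mulVec, hb1v, smul_smul, ← add_smul]
      congr 1
      have hp' : cS c m * l2 - sS c m * l1 ≠ 0 := by
        intro h; apply hp; linear_combination h
      field_simp
      linear_combination (-l1) * hcs
    have hA2v : sA2 c m b1 *ᵥ v = (l2 / (l2 * cS c m - l1 * sS c m)) • v := by
      rw [sA2, Matrix.sub_mulVec, Matrix.smul_mulVec, Matrix.smul_mulVec,
        Matrix.one_mulVec, hb1v, smul_smul, ← sub_smul]
      congr 1
      have hp' : cS c m * l2 - sS c m * l1 ≠ 0 := by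
        intro h; apply hp; linear_combination h
      field_simp
      linear_combination l2 * hcs
    by_cases hl2 : l2 = 0
    · -- use the Cn hypothesis
      have hl1 : l1 ≠ 0 := by
        intro h
        exact hne (by rw [h, hl2]; rfl)
      have hα : (-l1 / (l2 * cS c m - l1 * sS c m)) ≠ 0 :=
        div_ne_zero (neg_ne_zero.mpr hl1) hp
      have hCn : sC n c m b1 b2 ⟨n-1, by omega⟩ * sA1 c m b1 = b2 * (sA1 c m b1)^n := by
        show (sA2 c m b1)^(n-1-(n-1)) * ((sA1 c m b1)^(n-1) * b2) * sA1 c m b1 = _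
        rw [Nat.sub_self, pow_zero, Matrix.one_mul, Matrix.mul_assoc,
          ← (sComm1b m b1 b2 hb).eq, ← Matrix.mul_assoc, ← pow_succ,
          show n - 1 + 1 = n by omega]
        exact (((sComm1b m b1 b2 hb).symm.pow_right n).eq).symm
      rw [hCn] at hv3
      have hfin := eigen_extract (sA1 c m b1) b2 v _ _ hα hA1v n hv3
      exact hT2 ((l2 * sS c m + l1 * cS c m) / (l2 * cS c m - l1 * sS c m)) _ v hz hfin hev
    · -- use the C0 hypothesis
      have hα : (l2 / (l2 * cS c m - l1 * sS c m)) ≠ 0 := div_ne_zero hl2 hp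
      have hC0 : sC n c m b1 b2 ⟨0, hn⟩ * sA2 c m b1 = b2 * (sA2 c m b1)^n := by
        show (sA2 c m b1)^(n-1-0) * ((sA1 c m b1)^0 * b2) * sA2 c m b1 = _
        rw [Nat.sub_zero, pow_zero, Matrix.one_mul, Matrix.mul_assoc,
          ← (sComm2b m b1 b2 hb).eq, ← Matrix.mul_assoc, ← pow_succ,
          show n - 1 + 1 = n by omega]
        exact (((sComm2b m b1 b2 hb).symm.pow_right n).eq).symm
      rw [hC0] at hv2
      have hfin := eigen_extract (sA2 c m b1) b2 v _ _ hα hA2v n hv2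
      exact hT2 ((l2 * sS c m + l1 * cS c m) / (l2 * cS c m - l1 * sS c m)) _ v hz hfin hev

end SigmaP3
section Recover
open Finset

variable {n c : ℕ}

lemma C_recover (m : ℤ) (hn : 0 < n) (A1 A2 : Mat c) (C : Fin n → Mat c)
    (hP1 : CondP1 n c A1 A2 C) (hU : IsUnit (A2M c m A1 A2)) (j : Fin n) :
    ((A2M c m A1 A2)⁻¹ * A2)^(n-1-j.val)
      * ((((A2M c m A1 A2)⁻¹ * A1))^(j.val) * DM n c m C) = C j := by
  have hd : IsUnit (A2M c m A1 A2).det := (Matrix.isUnit_iff_isUnit_det _).1 hU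
  have hone : cS c m • ((A2M c m A1 A2)⁻¹ * A2) + sS c m • ((A2M c m A1 A2)⁻¹ * A1)
      = 1 := by
    rw [← mul_smul_comm, ← mul_smul_comm, ← mul_add,
      show cS c m • A2 + sS c m • A1 = A2M c m A1 A2 from by rw [A2M, add_comm],
      Matrix.nonsing_inv_mul _ hd]
  have hgood : GoodSeq ((A2M c m A1 A2)⁻¹ * A2) ((A2M c m A1 A2)⁻¹ * A1) (Cext C) n := by
    intro i hi
    have h1 := (hP1.2 i hi).1
    simp only [Cext]
    rw [dif_pos (show i < n by omega), dif_pos hi]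
    rw [Matrix.mul_assoc, Matrix.mul_assoc, ← h1]
  have hDM : DM n c m C = ((To (cS c m) (sS c m) c)^(n-1)) (Cext C) 0 := by
    rw [To_pow_apply, show n-1+1 = n by omega, DM,
      ← Fin.sum_univ_eq_sum_range (fun i =>
        (((n-1).choose i : ℂ) * cS c m ^(n-1-i) * sS c m ^ i) • Cext C (0+i)) n]
    refine Finset.sum_congr rfl fun q _ => ?_
    congr 1
    simp only [Cext, Nat.zero_add]
    rw [dif_pos q.isLt]
  rw [hDM]
  have h2 := key_recover hone hn hgood j.isLt
  rw [h2]
  simp only [Cext]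
  rw [dif_pos j.isLt]

lemma relP_sigma_g (m : ℤ) (hn : 0 < n) (A1 A2 : Mat c) (C : Fin n → Mat c) (e : Fin c → ℂ)
    (hP1 : CondP1 n c A1 A2 C) (hU : IsUnit (A2M c m A1 A2)) :
    (sA1 c m (BM c m A1 A2) = (A2M c m A1 A2)⁻¹ * A1 * 1⁻¹)
    ∧ (sA2 c m (BM c m A1 A2) = (A2M c m A1 A2)⁻¹ * A2 * 1⁻¹)
    ∧ (∀ j, sC n c m (BM c m A1 A2) (EM n c m A1 A2 C) j
        = 1 * C j * ((A2M c m A1 A2)⁻¹)⁻¹)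
    ∧ e = Matrix.vecMul e (1 : Mat c)⁻¹ := by
  have hd : IsUnit (A2M c m A1 A2).det := (Matrix.isUnit_iff_isUnit_det _).1 hU
  refine ⟨?_, ?_, ?_, ?_⟩
  · rw [inv_one, Matrix.mul_one]
    exact (hY_lemma m A1 A2 hd).symm
  · rw [inv_one, Matrix.mul_one]
    exact (hX_lemma m A1 A2 hd).symm
  · intro j
    rw [Matrix.one_mul, Matrix.nonsing_inv_nonsing_inv _ hd]
    show (sA2 c m (BM c m A1 A2))^(n-1-j.val)
      * ((sA1 c m (BM c m A1 A2))^(j.val) * EM n c m A1 A2 C) = C j * A2M c m A1 A2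
    rw [show sA1 c m (BM c m A1 A2) = (A2M c m A1 A2)⁻¹ * A1 from (hY_lemma m A1 A2 hd).symm,
      show sA2 c m (BM c m A1 A2) = (A2M c m A1 A2)⁻¹ * A2 from (hX_lemma m A1 A2 hd).symm,
      ← C_recover m hn A1 A2 C hP1 hU j, EM]
    simp only [Matrix.mul_assoc]
  · rw [inv_one, Matrix.vecMul_one]

end Recover

section Equivariance
open Finset

variable {n c : ℕ}

lemma A1M_conj (m : ℤ) (A1 A2 φ2 ψ : Mat c) :
    A1M c m (φ2*A1*ψ) (φ2*A2*ψ) = φ2 * A1M c m A1 A2 * ψ := by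
  simp only [A1M, Matrix.mul_sub, Matrix.sub_mul, mul_smul_comm, smul_mul_assoc]

lemma A2M_conj (m : ℤ) (A1 A2 φ2 ψ : Mat c) :
    A2M c m (φ2*A1*ψ) (φ2*A2*ψ) = φ2 * A2M c m A1 A2 * ψ := by
  simp only [A2M, Matrix.mul_add, Matrix.add_mul, mul_smul_comm, smul_mul_assoc]

lemma BM_conj (m : ℤ) (A1 A2 φ1 φ2 : Mat c) (hd1 : IsUnit φ1.det) (hd2 : IsUnit φ2.det) :
    BM c m (φ2*A1*φ1⁻¹) (φ2*A2*φ1⁻¹) = φ1 * BM c m A1 A2 * φ1⁻¹ := by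
  have hc : ∀ Z : Mat c, φ2⁻¹ * (φ2 * Z) = Z := fun Z => by
    rw [← Matrix.mul_assoc, Matrix.nonsing_inv_mul _ hd2, Matrix.one_mul]
  rw [BM, BM, A1M_conj, A2M_conj, Matrix.mul_inv_rev, Matrix.mul_inv_rev,
    Matrix.nonsing_inv_nonsing_inv _ hd1]
  simp only [Matrix.mul_assoc, hc]

lemma DM_conj (m : ℤ) (C : Fin n → Mat c) (φ1 ψ : Mat c) :
    DM n c m (fun j => φ1 * C j * ψ) = φ1 * DM n c m C * ψ := by
  rw [DM, DM, Finset.mul_sum, Finset.sum_mul]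
  refine Finset.sum_congr rfl fun q _ => ?_
  simp only [mul_smul_comm, smul_mul_assoc]

lemma EM_conj (m : ℤ) (A1 A2 : Mat c) (C : Fin n → Mat c) (φ1 φ2 : Mat c)
    (hd2 : IsUnit φ2.det) :
    EM n c m (φ2*A1*φ1⁻¹) (φ2*A2*φ1⁻¹) (fun j => φ1 * C j * φ2⁻¹)
      = φ1 * EM n c m A1 A2 C * φ1⁻¹ := by
  have hc : ∀ Z : Mat c, φ2⁻¹ * (φ2 * Z) = Z := fun Z => by
    rw [← Matrix.mul_assoc, Matrix.nonsing_inv_mul _ hd2, Matrix.one_mul]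
  rw [EM, EM, DM_conj, A2M_conj]
  simp only [Matrix.mul_assoc, hc]

lemma sA1_conj (m : ℤ) (b1 φ : Mat c) (hd : IsUnit φ.det) :
    sA1 c m (φ * b1 * φ⁻¹) = φ * sA1 c m b1 * φ⁻¹ := by
  rw [sA1, sA1]
  simp only [Matrix.mul_add, Matrix.add_mul, mul_smul_comm, smul_mul_assoc, Matrix.mul_one]
  rw [Matrix.mul_nonsing_inv _ hd]

lemma sA2_conj (m : ℤ) (b1 φ : Mat c) (hd : IsUnit φ.det) :
    sA2 c m (φ * b1 * φ⁻¹) = φ * sA2 c m b1 * φ⁻¹ := by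
  rw [sA2, sA2]
  simp only [Matrix.mul_sub, Matrix.sub_mul, mul_smul_comm, smul_mul_assoc, Matrix.mul_one]
  rw [Matrix.mul_nonsing_inv _ hd]

lemma sC_conj (m : ℤ) (b1 b2 φ : Mat c) (hd : IsUnit φ.det) (j : Fin n) :
    sC n c m (φ * b1 * φ⁻¹) (φ * b2 * φ⁻¹) j = φ * sC n c m b1 b2 j * φ⁻¹ := by
  have hc : ∀ Z : Mat c, φ⁻¹ * (φ * Z) = Z := fun Z => by
    rw [← Matrix.mul_assoc, Matrix.nonsing_inv_mul _ hd, Matrix.one_mul]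
  rw [sC, sC, sA1_conj m b1 φ hd, sA2_conj m b1 φ hd, conj_pow' _ _ hd, conj_pow' _ _ hd]
  simp only [Matrix.mul_assoc, hc]

end Equivariance
section Assembly

noncomputable def gMap (n c : ℕ) (hn : 0 < n) (m : ℕ) : PSubM n c hn m → TSubADHM c :=
  fun t => ⟨(BM c m t.1.1 t.1.2.1, EM n c m t.1.1 t.1.2.1 t.1.2.2.1, t.1.2.2.2),
    ADHM_image m hn t.1.1 t.1.2.1 t.1.2.2.1 t.1.2.2.2 t.2.1 t.2.2⟩

noncomputable def sMap (n c : ℕ) (hn : 0 < n) (m : ℕ) : TSubADHM c → PSubM n c hn m :=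
  fun b => ⟨(sA1 c m b.1.1, sA2 c m b.1.1, sC n c m b.1.1 b.1.2.1, b.1.2.2),
    ⟨⟨sP1 m hn b.1.1 b.1.2.1 b.2.1, sP2 m b.1.1,
      sP3 m hn b.1.1 b.1.2.1 b.1.2.2 b.2.1 b.2.2⟩,
      by rw [sA2M]; exact isUnit_one⟩⟩

lemma g_s (n c : ℕ) (hn : 0 < n) (m : ℕ) (b : TSubADHM c) :
    gMap n c hn m (sMap n c hn m b) = b := by
  obtain ⟨⟨b1, b2, e⟩, hb1, hb2⟩ := b
  apply Subtype.ext
  show (BM c m (sA1 c m b1) (sA2 c m b1),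
    EM n c m (sA1 c m b1) (sA2 c m b1) (sC n c m b1 b2), e) = (b1, b2, e)
  rw [sBM, sEM m hn b1 b2 hb1]

lemma relP_full (n c : ℕ) (hn : 0 < n) (m : ℕ) (t : PSubM n c hn m) :
    relP n c hn m t (sMap n c hn m (gMap n c hn m t)) := by
  obtain ⟨⟨A1, A2, C, e⟩, hP, hU⟩ := t
  obtain ⟨hs1, hs2, hs3, hs4⟩ := relP_sigma_g m hn A1 A2 C e hP.1 hU
  exact ⟨1, (A2M c m A1 A2)⁻¹, isUnit_one, Matrix.isUnit_nonsing_inv_iff.2 hU,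
    hs1, hs2, hs3, hs4⟩

end Assembly

/-- ζ_m induces a bijection between the orbit sets
P^n(c)_m / (GL(c,ℂ)×GL(c,ℂ)) and T(c) / GL(c,ℂ). -/
theorem stmt2 (n c : ℕ) (hn : 0 < n) (hc : 0 < c) (m : ℕ) (hm : m ≤ c) :
    ∃ g : PSubM n c hn m → TSubADHM c,
      (∀ t, (g t).1 =
        (BM c m t.1.1 t.1.2.1, EM n c m t.1.1 t.1.2.1 t.1.2.2.1, t.1.2.2.2)) ∧
      ∃ f : Quot (relP n c hn m) → Quot (relT c),
        Function.Bijective f ∧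
        ∀ t, f (Quot.mk (relP n c hn m) t) = Quot.mk (relT c) (g t) := by
  refine ⟨gMap n c hn m, fun t => rfl, ?_⟩
  have wd1 : ∀ t t' : PSubM n c hn m, relP n c hn m t t' →
      Quot.mk (relT c) (gMap n c hn m t) = Quot.mk (relT c) (gMap n c hn m t') := by
    rintro ⟨⟨A1, A2, C, e⟩, hP, hU⟩ ⟨⟨A1', A2', C', e'⟩, hP', hU'⟩
      ⟨φ1, φ2, hu1, hu2, h1, h2, h3, h4⟩
    apply Quot.sound
    have hd1 : IsUnit φ1.det := (Matrix.isUnit_iff_isUnit_det _).1 hu1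
    have hd2 : IsUnit φ2.det := (Matrix.isUnit_iff_isUnit_det _).1 hu2
    have h1' : A1' = φ2 * A1 * φ1⁻¹ := h1
    have h2' : A2' = φ2 * A2 * φ1⁻¹ := h2
    have h3' : ∀ j, C' j = φ1 * C j * φ2⁻¹ := h3
    have h4' : e' = Matrix.vecMul e φ1⁻¹ := h4
    refine ⟨φ1, hu1, ?_, ?_, ?_⟩
    · show BM c m A1' A2' = φ1 * BM c m A1 A2 * φ1⁻¹
      rw [h1', h2']
      exact BM_conj m A1 A2 φ1 φ2 hd1 hd2
    · show EM n c m A1' A2' C' = φ1 * EM n c m A1 A2 C * φ1⁻¹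
      rw [h1', h2', show C' = fun j => φ1 * C j * φ2⁻¹ from funext h3']
      exact EM_conj m A1 A2 C φ1 φ2 hd2
    · exact h4
  have wd2 : ∀ b b' : TSubADHM c, relT c b b' →
      Quot.mk (relP n c hn m) (sMap n c hn m b) = Quot.mk (relP n c hn m) (sMap n c hn m b') := by
    rintro ⟨⟨b1, b2, e⟩, hb⟩ ⟨⟨b1', b2', e'⟩, hb'⟩ ⟨φ, hu, h1, h2, h3⟩
    apply Quot.sound
    have hd : IsUnit φ.det := (Matrix.isUnit_iff_isUnit_det _).1 hu
    have h1' : b1' = φ * b1 * φ⁻¹ := h1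
    have h2' : b2' = φ * b2 * φ⁻¹ := h2
    refine ⟨φ, φ, hu, hu, ?_, ?_, ?_, ?_⟩
    · show sA1 c m b1' = φ * sA1 c m b1 * φ⁻¹
      rw [h1']; exact sA1_conj m b1 φ hd
    · show sA2 c m b1' = φ * sA2 c m b1 * φ⁻¹
      rw [h1']; exact sA2_conj m b1 φ hd
    · intro j
      show sC n c m b1' b2' j = φ * sC n c m b1 b2 j * φ⁻¹
      rw [h1', h2']; exact sC_conj m b1 b2 φ hd j
    · exact h3
  refine ⟨Quot.lift (fun t => Quot.mk (relT c) (gMap n c hn m t)) wd1, ?_, fun t => rfl⟩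
  refine Function.bijective_iff_has_inverse.mpr
    ⟨Quot.lift (fun b => Quot.mk (relP n c hn m) (sMap n c hn m b)) wd2, ?_, ?_⟩
  · intro q
    induction q using Quot.ind with
    | _ t => exact (Quot.sound (relP_full n c hn m t)).symm
  · intro q
    induction q using Quot.ind with
    | _ b =>
        show Quot.mk (relT c) (gMap n c hn m (sMap n c hn m b)) = Quot.mk (relT c) b
        rw [g_s n c hn m b]
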